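/- For every τ ∈ A₀ and every t ≥ 0, the following lower estimate holds in [0, ∞]: Σ_{(m,n) ∈ ℕ₊×ℕ₊} |m + nτ|^{−2t} ≥ (1/4) · Σ_{p=1}^{∞} 4^{p(1−t)} · (1 + |τ|)^{−2t}. -/

import Mathlib

open Complex Metric Filter Set
open scoped ENNReal NNReal Topology

noncomputable section

/-- The parameter space `A₀ = {u+iv : u ≥ 0, v ≥ 1}`. -/
def A0 : Set ℂ := {τ : ℂ | 0 ≤ τ.re ∧ 1 ≤ τ.im}

/-- The phase space `X = {z : |z - 1/2| ≤ 1/2}`. -/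
def Xcl : Set ℂ := {z : ℂ | ‖z - 1/2‖ ≤ 1/2}

/-- The alphabet `I_τ = {m + nτ : m, n ∈ ℕ₊}`. -/
def Itau (τ : ℂ) : Set ℂ := {b : ℂ | ∃ m n : ℕ+, b = ((m : ℕ) : ℂ) + ((n : ℕ) : ℂ) * τ}

/-- The generator `φ_b(z) = 1/(z+b)`. -/
def phi (b z : ℂ) : ℂ := 1 / (z + b)

lemma pow_block_eq {a b i j : ℕ} (hi : i < 2 ^ a) (hj : j < 2 ^ b)
    (h : 2 ^ a + i = 2 ^ b + j) : a = b := by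
  rcases lt_trichotomy a b with h1 | h1 | h1
  · have : 2 ^ a + i < 2 ^ b := by
      calc 2 ^ a + i < 2 ^ a + 2 ^ a := by omega
        _ = 2 ^ (a + 1) := by ring
        _ ≤ 2 ^ b := Nat.pow_le_pow_right (by norm_num) h1
    omega
  · exact h1
  · have : 2 ^ b + j < 2 ^ a := by
      calc 2 ^ b + j < 2 ^ b + 2 ^ b := by omega
        _ = 2 ^ (b + 1) := by ring
        _ ≤ 2 ^ a := Nat.pow_le_pow_right (by norm_num) h1
    omega

lemma half_pow_bound {p : ℕ+} (i : Fin (2 ^ ((p : ℕ) - 1))) :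
    2 ^ ((p : ℕ) - 1) + (i : ℕ) + 1 ≤ 2 ^ (p : ℕ) := by
  have hlt := i.isLt
  have hp1 : 0 < (p : ℕ) := p.pos
  have hdb : 2 ^ ((p:ℕ) - 1) + 2 ^ ((p:ℕ) - 1) = 2 ^ ((p:ℕ) - 1 + 1) := by ring
  have h2 : (p:ℕ) - 1 + 1 = (p:ℕ) := by omega
  rw [h2] at hdb
  omega

lemma rpow_anti {a b : ℝ≥0∞} (hab : a ≤ b) {t : ℝ} (ht : 0 ≤ t) :
    b ^ (-t) ≤ a ^ (-t) := by
  rw [ENNReal.rpow_neg, ENNReal.rpow_neg]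
  exact ENNReal.inv_le_inv.mpr (ENNReal.rpow_le_rpow hab ht)

/-- Lower estimate for `Σ_{b ∈ I_τ} |b|^{-2t}` in `[0,∞]`. -/
theorem stmt6 :
    ∀ τ ∈ A0, ∀ t : ℝ, 0 ≤ t →
      (∑' p : ℕ+ × ℕ+,
          ((‖((p.1 : ℕ) : ℂ) + ((p.2 : ℕ) : ℂ) * τ‖₊ : ℝ≥0∞) ^ (-(2 * t)))) ≥
        (1/4 : ℝ≥0∞) * ∑' p : ℕ+,
          (4 : ℝ≥0∞) ^ (((p : ℕ) : ℝ) * (1 - t)) * (ENNReal.ofReal (1 + ‖τ‖)) ^ (-(2 * t)) := by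
  intro τ hτ t ht
  set C : ℝ≥0∞ := (ENNReal.ofReal (1 + ‖τ‖)) ^ (-(2 * t)) with hC
  set F : ℕ+ × ℕ+ → ℝ≥0∞ := fun p =>
    ((‖((p.1 : ℕ) : ℂ) + ((p.2 : ℕ) : ℂ) * τ‖₊ : ℝ≥0∞) ^ (-(2 * t))) with hF
  set G : (Σ _p : ℕ+, Fin (2 ^ ((_p : ℕ) - 1)) × Fin (2 ^ ((_p : ℕ) - 1))) → ℕ+ × ℕ+ :=
    fun x => (⟨2 ^ ((x.1 : ℕ) - 1) + x.2.1.val + 1, by positivity⟩,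
              ⟨2 ^ ((x.1 : ℕ) - 1) + x.2.2.val + 1, by positivity⟩) with hG
  have hGinj : Function.Injective G := by
    rintro ⟨p, i, j⟩ ⟨q, k, l⟩ h
    have ha : 2 ^ ((p:ℕ) - 1) + i.val + 1 = 2 ^ ((q:ℕ) - 1) + k.val + 1 :=
      congrArg (fun x : ℕ+ × ℕ+ => (x.1 : ℕ)) h
    have hb : 2 ^ ((p:ℕ) - 1) + j.val + 1 = 2 ^ ((q:ℕ) - 1) + l.val + 1 :=
      congrArg (fun x : ℕ+ × ℕ+ => (x.2 : ℕ)) h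
    have hpq : (p : ℕ) - 1 = (q : ℕ) - 1 := pow_block_eq i.isLt k.isLt (by omega)
    have hpq2 : (p : ℕ) = (q : ℕ) := by
      have := p.pos; have := q.pos; omega
    have hpq' : p = q := PNat.coe_injective hpq2
    subst hpq'
    obtain rfl : i = k := Fin.val_injective (by omega)
    obtain rfl : j = l := Fin.val_injective (by omega)
    rfl
  have hkey : ∀ x : (Σ _p : ℕ+, Fin (2 ^ ((_p : ℕ) - 1)) × Fin (2 ^ ((_p : ℕ) - 1))),
      ((2 : ℝ≥0∞) ^ ((x.1 : ℕ) : ℝ)) ^ (-(2 * t)) * C ≤ F (G x) := by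
    rintro ⟨p, i, j⟩
    have hτn : (0:ℝ) ≤ ‖τ‖ := norm_nonneg τ
    show ((2 : ℝ≥0∞) ^ ((p : ℕ) : ℝ)) ^ (-(2 * t)) * C ≤
      ((‖(((2 ^ ((p : ℕ) - 1) + i.val + 1 : ℕ)) : ℂ) +
        (((2 ^ ((p : ℕ) - 1) + j.val + 1 : ℕ)) : ℂ) * τ‖₊ : ℝ≥0∞) ^ (-(2 * t)))
    have hm : ((2 ^ ((p : ℕ) - 1) + i.val + 1 : ℕ) : ℝ) ≤ (2 : ℝ) ^ (p : ℕ) :=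
      by exact_mod_cast half_pow_bound i
    have hn : ((2 ^ ((p : ℕ) - 1) + j.val + 1 : ℕ) : ℝ) ≤ (2 : ℝ) ^ (p : ℕ) :=
      by exact_mod_cast half_pow_bound j
    have hb : ‖(((2 ^ ((p : ℕ) - 1) + i.val + 1 : ℕ)) : ℂ) +
        (((2 ^ ((p : ℕ) - 1) + j.val + 1 : ℕ)) : ℂ) * τ‖
        ≤ (2 : ℝ) ^ (p : ℕ) * (1 + ‖τ‖) := by
      calc ‖(((2 ^ ((p : ℕ) - 1) + i.val + 1 : ℕ)) : ℂ) +
          (((2 ^ ((p : ℕ) - 1) + j.val + 1 : ℕ)) : ℂ) * τ‖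
          ≤ ‖(((2 ^ ((p : ℕ) - 1) + i.val + 1 : ℕ)) : ℂ)‖ +
            ‖(((2 ^ ((p : ℕ) - 1) + j.val + 1 : ℕ)) : ℂ) * τ‖ := norm_add_le _ _
        _ = ((2 ^ ((p : ℕ) - 1) + i.val + 1 : ℕ) : ℝ) +
            ((2 ^ ((p : ℕ) - 1) + j.val + 1 : ℕ) : ℝ) * ‖τ‖ := by
            rw [norm_mul, Complex.norm_natCast, Complex.norm_natCast]
        _ ≤ (2 : ℝ) ^ (p : ℕ) + (2 : ℝ) ^ (p : ℕ) * ‖τ‖ := by gcongr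
        _ = (2 : ℝ) ^ (p : ℕ) * (1 + ‖τ‖) := by ring
    have hnorm : (‖(((2 ^ ((p : ℕ) - 1) + i.val + 1 : ℕ)) : ℂ) +
        (((2 ^ ((p : ℕ) - 1) + j.val + 1 : ℕ)) : ℂ) * τ‖₊ : ℝ≥0∞)
        ≤ (2 : ℝ≥0∞) ^ ((p : ℕ) : ℝ) * ENNReal.ofReal (1 + ‖τ‖) := by
      calc (‖(((2 ^ ((p : ℕ) - 1) + i.val + 1 : ℕ)) : ℂ) +
          (((2 ^ ((p : ℕ) - 1) + j.val + 1 : ℕ)) : ℂ) * τ‖₊ : ℝ≥0∞)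
          = ENNReal.ofReal ‖(((2 ^ ((p : ℕ) - 1) + i.val + 1 : ℕ)) : ℂ) +
            (((2 ^ ((p : ℕ) - 1) + j.val + 1 : ℕ)) : ℂ) * τ‖ := (ofReal_norm _).symm
        _ ≤ ENNReal.ofReal ((2 : ℝ) ^ (p : ℕ) * (1 + ‖τ‖)) := ENNReal.ofReal_le_ofReal hb
        _ = ENNReal.ofReal ((2 : ℝ) ^ (p : ℕ)) * ENNReal.ofReal (1 + ‖τ‖) := by
            rw [ENNReal.ofReal_mul (by positivity)]
        _ = (2 : ℝ≥0∞) ^ ((p : ℕ) : ℝ) * ENNReal.ofReal (1 + ‖τ‖) := by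
            rw [ENNReal.rpow_natCast]
            congr 1
            rw [ENNReal.ofReal_pow (by norm_num)]
            norm_num
    have h2 := rpow_anti hnorm (by positivity : (0:ℝ) ≤ 2 * t)
    refine le_trans (le_of_eq ?_) h2
    rw [ENNReal.mul_rpow_of_ne_top
      (ENNReal.rpow_ne_top_of_nonneg (by positivity) (by norm_num))
      ENNReal.ofReal_ne_top]
  have step1 : (∑' x, F (G x)) ≤ ∑' p : ℕ+ × ℕ+, F p :=
    ENNReal.tsum_comp_le_tsum_of_injective hGinj F
  have step2 : (∑' x : (Σ _p : ℕ+, Fin (2 ^ ((_p : ℕ) - 1)) × Fin (2 ^ ((_p : ℕ) - 1))), F (G x))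
      = ∑' p : ℕ+, ∑' ij : Fin (2 ^ ((p : ℕ) - 1)) × Fin (2 ^ ((p : ℕ) - 1)), F (G ⟨p, ij⟩) :=
    ENNReal.tsum_sigma' _
  have step3 : ∀ p : ℕ+,
      (2 ^ ((p : ℕ) - 1) * 2 ^ ((p : ℕ) - 1) : ℕ) •
        (((2 : ℝ≥0∞) ^ ((p : ℕ) : ℝ)) ^ (-(2 * t)) * C)
      ≤ ∑' ij : Fin (2 ^ ((p : ℕ) - 1)) × Fin (2 ^ ((p : ℕ) - 1)), F (G ⟨p, ij⟩) := by
    intro p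
    rw [tsum_fintype]
    have := Finset.card_nsmul_le_sum Finset.univ
      (fun ij : Fin (2 ^ ((p : ℕ) - 1)) × Fin (2 ^ ((p : ℕ) - 1)) => F (G ⟨p, ij⟩))
      (((2 : ℝ≥0∞) ^ ((p : ℕ) : ℝ)) ^ (-(2 * t)) * C)
      (fun x _ => hkey ⟨p, x⟩)
    simpa using this
  have hterm : ∀ p : ℕ+,
      (1/4 : ℝ≥0∞) * ((4 : ℝ≥0∞) ^ (((p : ℕ) : ℝ) * (1 - t)) * C)
      = (2 ^ ((p : ℕ) - 1) * 2 ^ ((p : ℕ) - 1) : ℕ) •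
        (((2 : ℝ≥0∞) ^ ((p : ℕ) : ℝ)) ^ (-(2 * t)) * C) := by
    intro p
    have hp1 : 1 ≤ (p : ℕ) := p.pos
    have h22 : (2:ℝ≥0∞) ^ (2:ℝ) = 4 := by
      rw [show (2:ℝ) = ((2:ℕ):ℝ) by norm_num, ENNReal.rpow_natCast]; norm_num
    have h14 : (1/4 : ℝ≥0∞) = (2:ℝ≥0∞) ^ (-2 : ℝ) := by
      rw [ENNReal.rpow_neg, h22]
      norm_num
    have h4p : (4 : ℝ≥0∞) ^ (((p : ℕ) : ℝ) * (1 - t))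
        = (2:ℝ≥0∞) ^ ((2:ℝ) * (((p : ℕ) : ℝ) * (1 - t))) := by
      rw [← h22, ← ENNReal.rpow_mul]
    have h2p : ((2:ℝ≥0∞) ^ ((p : ℕ) : ℝ)) ^ (-(2 * t))
        = (2:ℝ≥0∞) ^ (((p : ℕ) : ℝ) * (-(2 * t))) := by
      rw [← ENNReal.rpow_mul]
    have hs : ((2 ^ ((p : ℕ) - 1) * 2 ^ ((p : ℕ) - 1) : ℕ) : ℝ≥0∞)
        = (2 : ℝ≥0∞) ^ ((((p:ℕ) - 1) + ((p:ℕ) - 1) : ℕ) : ℝ) := by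
      rw [ENNReal.rpow_natCast]
      push_cast
      rw [pow_add]
    have hcomb : ∀ a b : ℝ, (2:ℝ≥0∞) ^ a * ((2:ℝ≥0∞) ^ b * C) = (2:ℝ≥0∞) ^ (a + b) * C := by
      intro a b
      rw [← mul_assoc, ← ENNReal.rpow_add _ _ (by norm_num) (by norm_num)]
    rw [nsmul_eq_mul, hs, h14, h4p, h2p, hcomb, hcomb]
    congr 2
    rw [Nat.cast_add, Nat.cast_sub hp1]
    push_cast
    ring
  calc (1/4 : ℝ≥0∞) * ∑' p : ℕ+,
        (4 : ℝ≥0∞) ^ (((p : ℕ) : ℝ) * (1 - t)) * C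
      = ∑' p : ℕ+, (1/4 : ℝ≥0∞) * ((4 : ℝ≥0∞) ^ (((p : ℕ) : ℝ) * (1 - t)) * C) := by
        rw [ENNReal.tsum_mul_left]
    _ ≤ ∑' p : ℕ+, ∑' ij : Fin (2 ^ ((p : ℕ) - 1)) × Fin (2 ^ ((p : ℕ) - 1)), F (G ⟨p, ij⟩) := by
        apply ENNReal.tsum_le_tsum
        intro p
        rw [hterm p]
        exact step3 p
    _ = ∑' x, F (G x) := step2.symm
    _ ≤ ∑' p : ℕ+ × ℕ+, F p := step1
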